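/- Let d ≥ 1, σ > 0, and let P be a Borel probability measure on ℝ^d with finite (2d+ε) moments for some ε > 0, i.e., E[‖X‖^{2d+ε}] < ∞ for X ~ P. Then ∫_{ℝ^d} √(Var_P(φ_σ(x−·))) dx < ∞. -/

import Mathlib

open MeasureTheory ProbabilityTheory Real Filter
open scoped ENNReal NNReal

/-- The isotropic Gaussian density `φ_σ` on `ℝ^d`. -/
noncomputable def gaussDensity (d : ℕ) (σ : ℝ) (x : EuclideanSpace ℝ (Fin d)) : ℝ :=
  (2 * π * σ ^ 2) ^ (-(d : ℝ) / 2) * Real.exp (-‖x‖ ^ 2 / (2 * σ ^ 2))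

lemma my_sqrt_add_le {a b : ℝ} (ha : 0 ≤ a) (hb : 0 ≤ b) :
    Real.sqrt (a + b) ≤ Real.sqrt a + Real.sqrt b := by
  rw [← Real.sqrt_sq (by positivity : (0:ℝ) ≤ Real.sqrt a + Real.sqrt b)]
  apply Real.sqrt_le_sqrt
  nlinarith [Real.sq_sqrt ha, Real.sq_sqrt hb, Real.sqrt_nonneg a, Real.sqrt_nonneg b]

lemma my_integrable_gauss {d : ℕ} {a : ℝ} (ha : 0 < a) :
    Integrable (fun x : EuclideanSpace ℝ (Fin d) => Real.exp (-(a * ‖x‖ ^ 2))) := by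
  have h := (GaussianFourier.integrable_cexp_neg_mul_sq_norm_add
      (V := EuclideanSpace ℝ (Fin d)) (b := (a : ℂ)) (by simpa using ha) 0 0).norm
  refine h.congr (Eventually.of_forall fun x => ?_)
  simp only [Complex.norm_exp]
  congr 1
  have : (-(a:ℂ) * (‖x‖:ℂ) ^ 2 + 0 * ((inner ℝ (0 : EuclideanSpace ℝ (Fin d)) x : ℝ) : ℂ))
      = ((-(a * ‖x‖ ^ 2) : ℝ) : ℂ) := by push_cast; ring
  rw [this, Complex.ofReal_re]


/-- **Sufficient condition via moments:** if `P` has finite `(2d+ε)`-th moment for some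
`ε > 0`, then `∫ √(Var_P(φ_σ(x−·))) dx < ∞`. -/
theorem sqrt_variance_integral_finite_of_moments
    (d : ℕ) (hd : 1 ≤ d) (σ : ℝ) (hσ : 0 < σ)
    (P : Measure (EuclideanSpace ℝ (Fin d))) [IsProbabilityMeasure P]
    (ε : ℝ) (hε : 0 < ε)
    (hmom : ∫⁻ y, ENNReal.ofReal (‖y‖ ^ (2 * (d : ℝ) + ε)) ∂P < ⊤) :
    ∫⁻ x, ENNReal.ofReal
        (Real.sqrt (variance (fun y => gaussDensity d σ (x - y)) P)) < ⊤ := by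
  set p : ℝ := 2 * (d : ℝ) + ε with hp
  set q : ℝ := (d : ℝ) + ε / 2 with hq
  have hp_pos : 0 < p := by positivity
  have hq_pos : 0 < q := by positivity
  set c : ℝ := (2 * π * σ ^ 2) ^ (-(d : ℝ) / 2) with hc
  have hc_pos : 0 < c := Real.rpow_pos_of_pos (by positivity) _
  set M : ℝ := (∫⁻ y, ENNReal.ofReal (‖y‖ ^ p) ∂P).toReal with hM
  have hM_nonneg : 0 ≤ M := ENNReal.toReal_nonneg
  have hσ2 : (0:ℝ) < σ ^ 2 := by positivity
  -- basic facts about the gaussian density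
  have hg_pos : ∀ z : EuclideanSpace ℝ (Fin d), 0 < gaussDensity d σ z := fun z => by
    unfold gaussDensity; rw [← hc]; positivity
  have hg_le : ∀ z : EuclideanSpace ℝ (Fin d), gaussDensity d σ z ≤ c := fun z => by
    unfold gaussDensity; rw [← hc]
    nth_rewrite 2 [← mul_one c]
    apply mul_le_mul_of_nonneg_left _ hc_pos.le
    rw [Real.exp_le_one_iff]
    exact div_nonpos_of_nonpos_of_nonneg (neg_nonpos.mpr (by positivity)) (by positivity)
  have hg_cont : Continuous (gaussDensity d σ) := by
    unfold gaussDensity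
    exact continuous_const.mul (((continuous_norm.pow 2).neg.div_const _).rexp)
  -- the variance bound
  have hvar : ∀ x : EuclideanSpace ℝ (Fin d),
      variance (fun y => gaussDensity d σ (x - y)) P
        ≤ c ^ 2 * (Real.exp (-(1 / (8 * σ ^ 2)) * ‖x‖ ^ 2)
            + (P {y | ‖x‖ / 2 < ‖y‖}).toReal) := by
    intro x
    set g : EuclideanSpace ℝ (Fin d) → ℝ := fun y => gaussDensity d σ (x - y) with hgdef
    have hgc : Continuous g := hg_cont.comp (continuous_const.sub continuous_id)
    have hSmeas : MeasurableSet {y : EuclideanSpace ℝ (Fin d) | ‖x‖ / 2 < ‖y‖} :=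
      measurableSet_lt measurable_const measurable_norm
    refine (variance_le_expectation_sq (hgc.aestronglyMeasurable)).trans ?_
    have hint2 : Integrable (fun y => c ^ 2 * Real.exp (-(1 / (8 * σ ^ 2)) * ‖x‖ ^ 2)
        + Set.indicator {y : EuclideanSpace ℝ (Fin d) | ‖x‖ / 2 < ‖y‖}
          (fun _ => c ^ 2) y) P :=
      (integrable_const _).add ((integrable_const _).indicator hSmeas)
    have hint1 : Integrable (g ^ 2) P := by
      refine memLp_one_iff_integrable.mp (MemLp.of_bound
        ((hgc.pow 2).aestronglyMeasurable) (c ^ 2)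
        (Eventually.of_forall fun y => ?_))
      simp only [Pi.pow_apply, Real.norm_eq_abs, abs_pow, abs_of_pos (hg_pos _)]
      exact pow_le_pow_left₀ (abs_nonneg _) ((abs_of_pos (hg_pos (x - y))).le.trans (hg_le _)) 2
    have hptw : (g ^ 2) ≤ fun y => c ^ 2 * Real.exp (-(1 / (8 * σ ^ 2)) * ‖x‖ ^ 2)
        + Set.indicator {y : EuclideanSpace ℝ (Fin d) | ‖x‖ / 2 < ‖y‖}
          (fun _ => c ^ 2) y := by
      intro y
      simp only [Pi.pow_apply]
      by_cases hy : y ∈ {y : EuclideanSpace ℝ (Fin d) | ‖x‖ / 2 < ‖y‖}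
      · rw [Set.indicator_of_mem hy]
        have h1 : g y ^ 2 ≤ c ^ 2 := pow_le_pow_left₀ (hg_pos _).le (hg_le _) 2
        nlinarith [Real.exp_pos (-(1 / (8 * σ ^ 2)) * ‖x‖ ^ 2), sq_nonneg c]
      · rw [Set.indicator_of_notMem hy, add_zero]
        have hy' : ‖y‖ ≤ ‖x‖ / 2 := not_lt.mp hy
        have hxy : ‖x‖ / 2 ≤ ‖x - y‖ := by
          have := norm_sub_norm_le x y
          linarith
        have h2 : ‖x‖ ^ 2 / 4 ≤ ‖x - y‖ ^ 2 := by
          nlinarith [norm_nonneg x, norm_nonneg (x - y)]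
        have key : ‖x‖ ^ 2 / (8 * σ ^ 2) ≤ ‖x - y‖ ^ 2 / (2 * σ ^ 2) := by
          rw [div_le_div_iff₀ (by positivity) (by positivity)]
          nlinarith
        have h3 : g y ≤ c * Real.exp (-(1 / (8 * σ ^ 2)) * ‖x‖ ^ 2) := by
          show gaussDensity d σ (x - y) ≤ _
          unfold gaussDensity
          rw [← hc]
          apply mul_le_mul_of_nonneg_left _ hc_pos.le
          apply Real.exp_le_exp.mpr
          calc -‖x - y‖ ^ 2 / (2 * σ ^ 2) = -(‖x - y‖ ^ 2 / (2 * σ ^ 2)) := by ring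
            _ ≤ -(‖x‖ ^ 2 / (8 * σ ^ 2)) := by linarith
            _ = -(1 / (8 * σ ^ 2)) * ‖x‖ ^ 2 := by ring
        have h4 : g y ^ 2 ≤ c * g y := by
          nlinarith [(hg_pos (x - y)).le, hg_le (x - y)]
        calc g y ^ 2 ≤ c * g y := h4
          _ ≤ c * (c * Real.exp (-(1 / (8 * σ ^ 2)) * ‖x‖ ^ 2)) := by
              exact mul_le_mul_of_nonneg_left h3 hc_pos.le
          _ = c ^ 2 * Real.exp (-(1 / (8 * σ ^ 2)) * ‖x‖ ^ 2) := by ring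
    calc ∫ y, (g ^ 2) y ∂P
        ≤ ∫ y, (c ^ 2 * Real.exp (-(1 / (8 * σ ^ 2)) * ‖x‖ ^ 2)
            + Set.indicator {y : EuclideanSpace ℝ (Fin d) | ‖x‖ / 2 < ‖y‖}
              (fun _ => c ^ 2) y) ∂P := integral_mono hint1 hint2 hptw
      _ = c ^ 2 * (Real.exp (-(1 / (8 * σ ^ 2)) * ‖x‖ ^ 2)
            + (P {y | ‖x‖ / 2 < ‖y‖}).toReal) := by
          rw [integral_add (integrable_const _) ((integrable_const _).indicator hSmeas),
            integral_const, integral_indicator_const _ hSmeas]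
          simp [measure_univ]
          rw [measureReal_def]
          ring
  -- Markov bound on the tail probability, for ‖x‖ ≥ 1
  have hmarkov : ∀ x : EuclideanSpace ℝ (Fin d), 1 ≤ ‖x‖ →
      (P {y | ‖x‖ / 2 < ‖y‖}).toReal ≤ M / (‖x‖ / 2) ^ p := by
    intro x hx
    have hx2 : (0:ℝ) < ‖x‖ / 2 := by linarith
    have hεp : (0:ℝ) < (‖x‖ / 2) ^ p := Real.rpow_pos_of_pos hx2 _
    have hfmeas : AEMeasurable (fun y : EuclideanSpace ℝ (Fin d) =>
        ENNReal.ofReal (‖y‖ ^ p)) P :=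
      (ENNReal.measurable_ofReal.comp
        ((Real.continuous_rpow_const hp_pos.le).comp continuous_norm).measurable).aemeasurable
    have hsub : {y : EuclideanSpace ℝ (Fin d) | ‖x‖ / 2 < ‖y‖} ⊆
        {y | ENNReal.ofReal ((‖x‖ / 2) ^ p) ≤ ENNReal.ofReal (‖y‖ ^ p)} := by
      intro y hy
      exact ENNReal.ofReal_le_ofReal (Real.rpow_le_rpow hx2.le (le_of_lt hy) hp_pos.le)
    have h1 : P {y | ‖x‖ / 2 < ‖y‖} ≤ (∫⁻ y, ENNReal.ofReal (‖y‖ ^ p) ∂P)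
        / ENNReal.ofReal ((‖x‖ / 2) ^ p) :=
      le_trans (measure_mono hsub) (meas_ge_le_lintegral_div hfmeas
        (ne_of_gt (ENNReal.ofReal_pos.mpr hεp)) ENNReal.ofReal_ne_top)
    have hne : (∫⁻ y, ENNReal.ofReal (‖y‖ ^ p) ∂P)
        / ENNReal.ofReal ((‖x‖ / 2) ^ p) ≠ ⊤ :=
      (ENNReal.div_lt_top hmom.ne (ne_of_gt (ENNReal.ofReal_pos.mpr hεp))).ne
    calc (P {y | ‖x‖ / 2 < ‖y‖}).toReal
        ≤ ((∫⁻ y, ENNReal.ofReal (‖y‖ ^ p) ∂P)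
            / ENNReal.ofReal ((‖x‖ / 2) ^ p)).toReal := ENNReal.toReal_mono hne h1
      _ = M / (‖x‖ / 2) ^ p := by
          rw [ENNReal.toReal_div, ENNReal.toReal_ofReal hεp.le]
  -- tail bound on the square root of the tail probability
  set K : ℝ := max (Real.sqrt (M * 2 ^ p)) 1 * 2 ^ q with hK
  have hK_pos : 0 < K :=
    mul_pos (lt_of_lt_of_le one_pos (le_max_right _ _)) (Real.rpow_pos_of_pos two_pos _)
  have htail : ∀ x : EuclideanSpace ℝ (Fin d),
      Real.sqrt ((P {y | ‖x‖ / 2 < ‖y‖}).toReal) ≤ K * (1 + ‖x‖) ^ (-q) := by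
    intro x
    have h1x : (0:ℝ) < 1 + ‖x‖ := by positivity
    by_cases hx : 1 ≤ ‖x‖
    · have hxpos : (0:ℝ) < ‖x‖ := lt_of_lt_of_le one_pos hx
      have hxp : (0:ℝ) < ‖x‖ ^ p := Real.rpow_pos_of_pos hxpos _
      have h2p : (0:ℝ) < (2:ℝ) ^ p := Real.rpow_pos_of_pos two_pos _
      have hm := hmarkov x hx
      have e1 : ((‖x‖ : ℝ) ^ (-q)) ^ 2 = (‖x‖ ^ p)⁻¹ := by
        rw [← Real.rpow_natCast (‖x‖ ^ (-q)) 2, ← Real.rpow_mul (norm_nonneg x),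
          show (-q) * ((2:ℕ):ℝ) = -p by rw [hp, hq]; push_cast; ring]
        exact Real.rpow_neg (norm_nonneg x) p
      have e2 : M / (‖x‖ / 2) ^ p = M * 2 ^ p * (‖x‖ ^ p)⁻¹ := by
        rw [Real.div_rpow (norm_nonneg x) (by norm_num : (0:ℝ) ≤ 2)]
        field_simp
      have haux : ‖x‖ ^ (-q) ≤ 2 ^ q * (1 + ‖x‖) ^ (-q) := by
        have h0 : (2 * ‖x‖) ^ (-q) ≤ (1 + ‖x‖) ^ (-q) :=
          Real.rpow_le_rpow_of_nonpos h1x (by linarith) (by linarith)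
        have h1 : (2 * ‖x‖) ^ (-q) = 2 ^ (-q) * ‖x‖ ^ (-q) :=
          Real.mul_rpow (by norm_num) (norm_nonneg x)
        calc ‖x‖ ^ (-q) = 2 ^ q * ((2 * ‖x‖) ^ (-q)) := by
              rw [h1, ← mul_assoc, ← Real.rpow_add two_pos]; simp
          _ ≤ 2 ^ q * (1 + ‖x‖) ^ (-q) :=
              mul_le_mul_of_nonneg_left h0 (Real.rpow_nonneg (by norm_num) _)
      calc Real.sqrt ((P {y | ‖x‖ / 2 < ‖y‖}).toReal)
          ≤ Real.sqrt (M * 2 ^ p * (‖x‖ ^ (-q)) ^ 2) :=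
            Real.sqrt_le_sqrt (by rw [e1]; rw [e2] at hm; exact hm)
        _ = Real.sqrt (M * 2 ^ p) * ‖x‖ ^ (-q) := by
            rw [Real.sqrt_mul (mul_nonneg hM_nonneg h2p.le),
              Real.sqrt_sq (Real.rpow_nonneg (norm_nonneg x) _)]
        _ ≤ max (Real.sqrt (M * 2 ^ p)) 1 * (2 ^ q * (1 + ‖x‖) ^ (-q)) :=
            mul_le_mul (le_max_left _ _) haux (Real.rpow_nonneg (norm_nonneg x) _)
              (le_trans zero_le_one (le_max_right _ _))
        _ = K * (1 + ‖x‖) ^ (-q) := by rw [hK]; ring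
    · push_neg at hx
      have hB1 : (P {y | ‖x‖ / 2 < ‖y‖}).toReal ≤ 1 := by
        simpa using ENNReal.toReal_mono ENNReal.one_ne_top prob_le_one
      have h2 : (2:ℝ) ^ (-q) ≤ (1 + ‖x‖) ^ (-q) :=
        Real.rpow_le_rpow_of_nonpos h1x (by linarith) (by linarith)
      calc Real.sqrt ((P {y | ‖x‖ / 2 < ‖y‖}).toReal)
          ≤ Real.sqrt 1 := Real.sqrt_le_sqrt hB1
        _ = 2 ^ q * 2 ^ (-q) := by rw [Real.sqrt_one, ← Real.rpow_add two_pos]; simp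
        _ ≤ 2 ^ q * (1 + ‖x‖) ^ (-q) :=
            mul_le_mul_of_nonneg_left h2 (Real.rpow_nonneg (by norm_num) _)
        _ ≤ K * (1 + ‖x‖) ^ (-q) := by
            apply mul_le_mul_of_nonneg_right _ (Real.rpow_nonneg h1x.le _)
            rw [hK]
            exact le_mul_of_one_le_left (Real.rpow_nonneg (by norm_num) _) (le_max_right _ _)
  -- the square root of the gaussian term
  have hgauss_sqrt : ∀ x : EuclideanSpace ℝ (Fin d),
      Real.sqrt (Real.exp (-(1 / (8 * σ ^ 2)) * ‖x‖ ^ 2))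
        = Real.exp (-(1 / (16 * σ ^ 2) * ‖x‖ ^ 2)) := by
    intro x
    rw [← Real.exp_half]
    exact congrArg Real.exp (by field_simp; ring)
  -- the pointwise bound
  have hbound : ∀ x : EuclideanSpace ℝ (Fin d),
      Real.sqrt (variance (fun y => gaussDensity d σ (x - y)) P)
        ≤ c * Real.exp (-(1 / (16 * σ ^ 2) * ‖x‖ ^ 2)) + c * K * (1 + ‖x‖) ^ (-q) := by
    intro x
    have hA : 0 ≤ Real.exp (-(1 / (8 * σ ^ 2)) * ‖x‖ ^ 2) := (Real.exp_pos _).le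
    have hB0 : (0:ℝ) ≤ (P {y | ‖x‖ / 2 < ‖y‖}).toReal := ENNReal.toReal_nonneg
    calc Real.sqrt (variance (fun y => gaussDensity d σ (x - y)) P)
        ≤ Real.sqrt (c ^ 2 * (Real.exp (-(1 / (8 * σ ^ 2)) * ‖x‖ ^ 2)
            + (P {y | ‖x‖ / 2 < ‖y‖}).toReal)) := Real.sqrt_le_sqrt (hvar x)
      _ = c * Real.sqrt (Real.exp (-(1 / (8 * σ ^ 2)) * ‖x‖ ^ 2)
            + (P {y | ‖x‖ / 2 < ‖y‖}).toReal) := by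
          rw [Real.sqrt_mul (sq_nonneg c), Real.sqrt_sq hc_pos.le]
      _ ≤ c * (Real.sqrt (Real.exp (-(1 / (8 * σ ^ 2)) * ‖x‖ ^ 2))
            + Real.sqrt ((P {y | ‖x‖ / 2 < ‖y‖}).toReal)) :=
          mul_le_mul_of_nonneg_left (my_sqrt_add_le hA hB0) hc_pos.le
      _ ≤ c * (Real.exp (-(1 / (16 * σ ^ 2) * ‖x‖ ^ 2)) + K * (1 + ‖x‖) ^ (-q)) := by
          rw [hgauss_sqrt x]
          exact mul_le_mul_of_nonneg_left (add_le_add_right (htail x) _) hc_pos.le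
      _ = c * Real.exp (-(1 / (16 * σ ^ 2) * ‖x‖ ^ 2)) + c * K * (1 + ‖x‖) ^ (-q) := by
          ring
  -- the bounding function is integrable
  have hrqd : (Module.finrank ℝ (EuclideanSpace ℝ (Fin d)) : ℝ) < q := by
    rw [finrank_euclideanSpace_fin, hq]; linarith
  have hint_exp : Integrable
      (fun x : EuclideanSpace ℝ (Fin d) => c * Real.exp (-(1 / (16 * σ ^ 2) * ‖x‖ ^ 2))) :=
    (my_integrable_gauss (by positivity)).const_mul c
  have hint_tail : Integrable
      (fun x : EuclideanSpace ℝ (Fin d) => c * K * (1 + ‖x‖) ^ (-q)) :=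
    (integrable_one_add_norm hrqd).const_mul _
  have hF : Integrable (fun x : EuclideanSpace ℝ (Fin d) =>
      c * Real.exp (-(1 / (16 * σ ^ 2) * ‖x‖ ^ 2)) + c * K * (1 + ‖x‖) ^ (-q)) :=
    hint_exp.add hint_tail
  have hFnn : ∀ x : EuclideanSpace ℝ (Fin d),
      0 ≤ c * Real.exp (-(1 / (16 * σ ^ 2) * ‖x‖ ^ 2)) + c * K * (1 + ‖x‖) ^ (-q) := by
    intro x
    have h1x : (0:ℝ) < 1 + ‖x‖ := by positivity
    exact add_nonneg (mul_nonneg hc_pos.le (Real.exp_pos _).le)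
      (mul_nonneg (mul_nonneg hc_pos.le hK_pos.le) (Real.rpow_nonneg h1x.le _))
  refine lt_of_le_of_lt (lintegral_mono fun x => ENNReal.ofReal_le_ofReal (hbound x)) ?_
  rw [lt_top_iff_ne_top]
  exact (lintegral_ofReal_ne_top_iff_integrable hF.aestronglyMeasurable
    (Eventually.of_forall hFnn)).mpr hF
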